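/- Let A be an r × c quaternion matrix with r ≥ 1 and c ≥ 1, and let a denote its first row. Then there exists a unitary quaternion matrix G ∈ ℍ^{c×c} such that the product A * G has first row equal to ‖a‖ times the first standard basis (row) vector: (A * G) 0 j = 0 for all j ≠ 0, and (A * G) 0 0 equals the real quaternion ‖a‖ (in particular it has zero vector part and is nonnegative). -/

import Mathlib

set_option maxHeartbeats 1000000

open Matrix

noncomputable section

private lemma q_star_mul_self (q : Quaternion ℝ) :
    star q * q = ((‖q‖ ^ 2 : ℝ) : Quaternion ℝ) := by
  rw [Quaternion.star_mul_self, sq, Quaternion.normSq_eq_norm_mul_self]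

private lemma q_self_mul_star (q : Quaternion ℝ) :
    q * star q = ((‖q‖ ^ 2 : ℝ) : Quaternion ℝ) := by
  rw [Quaternion.self_mul_star, sq, Quaternion.normSq_eq_norm_mul_self]

private lemma q_star_smul (x : ℝ) (q : Quaternion ℝ) : star (x • q) = x • star q := by
  rw [← Quaternion.coe_mul_eq_smul, StarMul.star_mul, Quaternion.star_coe, ← Quaternion.coe_commutes,
    Quaternion.coe_mul_eq_smul]

private lemma q_coe_sum {ι : Type*} (s : Finset ι) (f : ι → ℝ) :
    ((∑ i ∈ s, f i : ℝ) : Quaternion ℝ) = ∑ i ∈ s, ((f i : ℝ) : Quaternion ℝ) :=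
  map_sum (algebraMap ℝ (Quaternion ℝ)) f s

private lemma q_mul_comm (r : ℝ) (x : Quaternion ℝ) :
    x * ((r : ℝ) : Quaternion ℝ) = ((r : ℝ) : Quaternion ℝ) * x :=
  (Quaternion.coe_commutes r x).symm

private lemma q_comm_mul (r : ℝ) (x y : Quaternion ℝ) :
    x * (((r : ℝ) : Quaternion ℝ) * y) = ((r : ℝ) : Quaternion ℝ) * (x * y) := by
  rw [← mul_assoc, q_mul_comm, mul_assoc]

private lemma q_abel {G : Type*} [AddCommGroup G] (X Y : G) : Y - X - (X - (X + X)) = Y := by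
  abel

private lemma key_lemma (c : ℕ) (z : Fin c) (a : Fin c → Quaternion ℝ) :
    ∃ G : Matrix (Fin c) (Fin c) (Quaternion ℝ),
      G * Gᴴ = 1 ∧ Gᴴ * G = 1 ∧
      (∀ j, j ≠ z → ∑ k, a k * G k j = 0) ∧
      ∑ k, a k * G k z = ((Real.sqrt (∑ k, ‖a k‖ ^ 2) : ℝ) : Quaternion ℝ) := by
  classical
  set β : ℝ := Real.sqrt (∑ k, ‖a k‖ ^ 2) with hβ
  have hβ0 : 0 ≤ β := Real.sqrt_nonneg _
  have hsum0 : 0 ≤ ∑ k, ‖a k‖ ^ 2 := Finset.sum_nonneg fun k _ => sq_nonneg _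
  have hβsq : β ^ 2 = ∑ k, ‖a k‖ ^ 2 := Real.sq_sqrt hsum0
  set w : Fin c → Quaternion ℝ := fun k => star (a k) with hw
  have hnw : ∀ k, ‖w k‖ = ‖a k‖ := fun k => norm_star _
  set p : Quaternion ℝ := if w z = 0 then 1 else ((‖w z‖⁻¹ : ℝ) : Quaternion ℝ) * w z with hp
  have hnp : ‖p‖ = 1 := by
    rw [hp]; split_ifs with h
    · simp
    · rw [norm_mul, Quaternion.norm_coe, Real.norm_eq_abs, abs_inv, abs_norm]
      exact inv_mul_cancel₀ (norm_ne_zero_iff.mpr h)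
  have hspp : star p * p = 1 := by
    rw [q_star_mul_self, hnp]; norm_num
  have hpsp : p * star p = 1 := by
    rw [q_self_mul_star, hnp]; norm_num
  have hwzp : w z = ((‖w z‖ : ℝ) : Quaternion ℝ) * p := by
    rw [hp]; split_ifs with h
    · simp [h]
    · rw [← mul_assoc, ← Quaternion.coe_mul, mul_inv_cancel₀ (norm_ne_zero_iff.mpr h)]
      simp
  have hpz : star p * w z = ((‖w z‖ : ℝ) : Quaternion ℝ) := by
    conv_lhs => rw [hwzp]
    rw [q_comm_mul, hspp, mul_one]
  have hzp : star (w z) * p = ((‖w z‖ : ℝ) : Quaternion ℝ) := by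
    conv_lhs => rw [hwzp]
    rw [StarMul.star_mul, Quaternion.star_coe, q_mul_comm, mul_assoc, hspp, mul_one]
  set v : Fin c → Quaternion ℝ :=
    Function.update w z (w z - ((β : ℝ) : Quaternion ℝ) * p) with hv
  have hvne : ∀ k, k ≠ z → v k = w k := fun k hk => Function.update_of_ne hk _ _
  have hvz : v z = w z - ((β : ℝ) : Quaternion ℝ) * p := Function.update_self _ _ _
  set t : ℝ := 2 * (β ^ 2 - β * ‖w z‖) with ht
  -- the key scalar sums
  have hS : ∑ k, a k * v k = ((β ^ 2 - β * ‖w z‖ : ℝ) : Quaternion ℝ) := by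
    have h1 : ∑ k, a k * v k
        = ∑ k ∈ Finset.univ \ {z}, a k * v k + a z * v z :=
      Finset.sum_eq_sum_sdiff_singleton_add (Finset.mem_univ z) _
    have h2 : ∑ k ∈ Finset.univ \ {z}, a k * v k
        = ∑ k ∈ Finset.univ \ {z}, ((‖a k‖ ^ 2 : ℝ) : Quaternion ℝ) := by
      refine Finset.sum_congr rfl fun k hk => ?_
      have hk' : k ≠ z := by simpa using (Finset.mem_sdiff.mp hk).2
      rw [hvne k hk', hw]
      simpa using q_self_mul_star (a k)
    have h3 : a z * v z = ((‖a z‖ ^ 2 - β * ‖w z‖ : ℝ) : Quaternion ℝ) := by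
      rw [hvz, mul_sub, ← mul_assoc, ← Quaternion.coe_commutes, mul_assoc]
      have : a z * p = ((‖w z‖ : ℝ) : Quaternion ℝ) := by
        have : a z = star (w z) := by simp [hw]
        rw [this, hzp]
      rw [this]
      have : a z * w z = ((‖a z‖ ^ 2 : ℝ) : Quaternion ℝ) := by
        simpa [hw] using q_self_mul_star (a z)
      rw [this, ← Quaternion.coe_mul, ← Quaternion.coe_sub]
    rw [h1, h2, h3, ← q_coe_sum, ← Quaternion.coe_add]
    congr 1
    have : ∑ k ∈ Finset.univ \ {z}, ‖a k‖ ^ 2 = (∑ k, ‖a k‖ ^ 2) - ‖a z‖ ^ 2 := by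
      rw [Finset.sum_eq_sum_sdiff_singleton_add (Finset.mem_univ z) (fun k => ‖a k‖ ^ 2)]
      ring
    rw [this, ← hβsq]; ring
  have hT : ∑ k, star (v k) * v k = ((t : ℝ) : Quaternion ℝ) := by
    have h1 : ∑ k, star (v k) * v k
        = ∑ k ∈ Finset.univ \ {z}, star (v k) * v k + star (v z) * v z :=
      Finset.sum_eq_sum_sdiff_singleton_add (Finset.mem_univ z) _
    have h2 : ∑ k ∈ Finset.univ \ {z}, star (v k) * v k
        = ∑ k ∈ Finset.univ \ {z}, ((‖a k‖ ^ 2 : ℝ) : Quaternion ℝ) := by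
      refine Finset.sum_congr rfl fun k hk => ?_
      have hk' : k ≠ z := by simpa using (Finset.mem_sdiff.mp hk).2
      rw [hvne k hk', q_star_mul_self, hnw]
    have h3 : star (v z) * v z
        = ((‖w z‖ ^ 2 - 2 * β * ‖w z‖ + β ^ 2 : ℝ) : Quaternion ℝ) := by
      rw [hvz, star_sub, StarMul.star_mul, Quaternion.star_coe, sub_mul, mul_sub, mul_sub,
        q_star_mul_self]
      have e1 : star (w z) * (((β : ℝ) : Quaternion ℝ) * p)
          = ((β * ‖w z‖ : ℝ) : Quaternion ℝ) := by
        rw [q_comm_mul, hzp, ← Quaternion.coe_mul]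
      have e2 : star p * ((β : ℝ) : Quaternion ℝ) * w z
          = ((β * ‖w z‖ : ℝ) : Quaternion ℝ) := by
        rw [q_mul_comm, mul_assoc, hpz, ← Quaternion.coe_mul]
      have e3 : star p * ((β : ℝ) : Quaternion ℝ) * (((β : ℝ) : Quaternion ℝ) * p)
          = ((β ^ 2 : ℝ) : Quaternion ℝ) := by
        rw [q_mul_comm, mul_assoc, q_comm_mul, hspp, mul_one, ← Quaternion.coe_mul, ← sq]
      rw [e1, e2, e3, ← Quaternion.coe_sub, ← Quaternion.coe_sub, ← Quaternion.coe_sub]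
      congr 1; ring
    rw [h1, h2, h3, ← q_coe_sum, ← Quaternion.coe_add]
    congr 1
    have h4 : ∑ k ∈ Finset.univ \ {z}, ‖a k‖ ^ 2 = (∑ k, ‖a k‖ ^ 2) - ‖a z‖ ^ 2 := by
      rw [Finset.sum_eq_sum_sdiff_singleton_add (Finset.mem_univ z) (fun k => ‖a k‖ ^ 2)]
      ring
    rw [h4, ← hβsq, ht, ← hnw z]; ring
  -- the diagonal phase matrix
  set d : Fin c → Quaternion ℝ := fun i => if i = z then p else 1 with hd
  have hdz : d z = p := if_pos rfl
  have hdd : ∀ i, d i * star (d i) = 1 := by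
    intro i; rw [hd]; dsimp only; split_ifs
    · exact hpsp
    · simp
  have hdd' : ∀ i, star (d i) * d i = 1 := by
    intro i; rw [hd]; dsimp only; split_ifs
    · exact hspp
    · simp
  set D : Matrix (Fin c) (Fin c) (Quaternion ℝ) := Matrix.diagonal d with hD
  have hDD : D * Dᴴ = 1 := by
    rw [hD, Matrix.diagonal_conjTranspose, Matrix.diagonal_mul_diagonal]
    rw [show (fun i => d i * Star.star d i) = fun _ => (1 : Quaternion ℝ) from funext hdd]
    exact Matrix.diagonal_one
  have hDD' : Dᴴ * D = 1 := by
    rw [hD, Matrix.diagonal_conjTranspose, Matrix.diagonal_mul_diagonal]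
    rw [show (fun i => Star.star d i * d i) = fun _ => (1 : Quaternion ℝ) from funext hdd']
    exact Matrix.diagonal_one
  by_cases ht0 : t = 0
  · -- degenerate case : the row is already of the form α e_z
    have hb2 : β ^ 2 = β * ‖w z‖ := by
      have := ht0; rw [ht] at this; linarith
    obtain ⟨hbz, hak⟩ : β = ‖w z‖ ∧ ∀ k, k ≠ z → a k = 0 := by
      by_cases hb : β = 0
      · have hsum : ∑ k, ‖a k‖ ^ 2 = 0 := by rw [← hβsq, hb]; ring
        have hall : ∀ k : Fin c, a k = 0 := by
          intro k
          have := (Finset.sum_eq_zero_iff_of_nonneg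
            (fun k _ => sq_nonneg ‖a k‖)).mp hsum k (Finset.mem_univ k)
          have : ‖a k‖ = 0 := sq_eq_zero_iff.mp this
          exact norm_eq_zero.mp this
        refine ⟨?_, fun k _ => hall k⟩
        rw [hb, hnw, hall z, norm_zero]
      · have hbz : β = ‖w z‖ := by
          have : β * β = β * ‖w z‖ := by rw [← sq]; exact hb2
          exact mul_left_cancel₀ hb this
        refine ⟨hbz, fun k hk => ?_⟩
        have h4 : ∑ j ∈ Finset.univ \ {z}, ‖a j‖ ^ 2 = (∑ j, ‖a j‖ ^ 2) - ‖a z‖ ^ 2 := by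
          rw [Finset.sum_eq_sum_sdiff_singleton_add (Finset.mem_univ z) (fun j => ‖a j‖ ^ 2)]
          ring
        have h5 : ∑ j ∈ Finset.univ \ {z}, ‖a j‖ ^ 2 = 0 := by
          rw [h4, ← hβsq, hbz, hnw]; ring
        have := (Finset.sum_eq_zero_iff_of_nonneg
          (fun j _ => sq_nonneg ‖a j‖)).mp h5 k (by simp [hk])
        have : ‖a k‖ = 0 := sq_eq_zero_iff.mp this
        exact norm_eq_zero.mp this
    refine ⟨D, hDD, hDD', ?_, ?_⟩
    all_goals
      have hdiag : ∀ j : Fin c, ∑ k, a k * D k j = a j * d j := by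
        intro j
        rw [hD, Finset.sum_eq_single j]
        · rw [Matrix.diagonal_apply_eq]
        · intro k _ hk; rw [Matrix.diagonal_apply_ne _ hk, mul_zero]
        · intro h; exact absurd (Finset.mem_univ j) h
    · intro j hj
      rw [hdiag, hak j hj, zero_mul]
    · rw [hdiag, hdz]
      have : a z = star (w z) := by simp [hw]
      rw [this, hzp, ← hbz]
  · -- main case : Householder reflection
    set M : Matrix (Fin c) (Fin c) (Quaternion ℝ) := Matrix.of fun i j => v i * star (v j)
      with hM
    have hMapp : ∀ i j, M i j = v i * star (v j) := fun i j => rfl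
    have hMH : Mᴴ = M := by
      apply Matrix.ext; intro i j
      rw [Matrix.conjTranspose_apply, hMapp, hMapp, StarMul.star_mul, star_star]
    have hMM : M * M = t • M := by
      apply Matrix.ext; intro i j
      rw [Matrix.mul_apply, Matrix.smul_apply]
      have hterm : ∀ k, M i k * M k j = v i * ((star (v k) * v k) * star (v j)) := by
        intro k
        rw [hMapp, hMapp, mul_assoc, ← mul_assoc (star (v k))]
      rw [Finset.sum_congr rfl fun k _ => hterm k, ← Finset.mul_sum, ← Finset.sum_mul, hT]
      rw [q_comm_mul, ← Quaternion.coe_mul_eq_smul, hMapp]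
    set H : Matrix (Fin c) (Fin c) (Quaternion ℝ) := 1 - (2 * t⁻¹) • M with hH
    have hHH : Hᴴ = H := by
      rw [hH, Matrix.conjTranspose_sub, Matrix.conjTranspose_one]
      congr 1
      apply Matrix.ext; intro i j
      rw [Matrix.conjTranspose_apply, Matrix.smul_apply, q_star_smul, Matrix.smul_apply]
      congr 1
      have := congrFun (congrFun hMH i) j
      rw [Matrix.conjTranspose_apply] at this
      exact this
    have hXX : ((2 * t⁻¹) • M) * ((2 * t⁻¹) • M) = (2 * (2 * t⁻¹)) • M := by
      rw [Matrix.smul_mul, Matrix.mul_smul, hMM, smul_smul, smul_smul]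
      congr 1
      field_simp
    have hHHmul : H * H = 1 := by
      have h2smul : (2 * (2 * t⁻¹)) • M = (2 * t⁻¹) • M + (2 * t⁻¹) • M := by
        rw [← add_smul]; congr 1; ring
      rw [hH, sub_mul, mul_sub, mul_sub, one_mul, mul_one, hXX, h2smul]
      rw [one_mul, q_abel]
    have hrow : ∀ j, ∑ k, a k * H k j = a j - star (v j) := by
      intro j
      have hHapp : ∀ k, H k j
          = (if k = j then 1 else 0) - (2 * t⁻¹) • (v k * star (v j)) := by
        intro k
        rw [hH, Matrix.sub_apply, Matrix.one_apply, Matrix.smul_apply, hMapp]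
      have hterm : ∀ k, a k * H k j
          = (if k = j then a k else 0) - (2 * t⁻¹) • (a k * v k * star (v j)) := by
        intro k
        rw [hHapp, mul_sub, mul_smul_comm, mul_ite, mul_one, mul_zero, ← mul_assoc]
      rw [Finset.sum_congr rfl fun k _ => hterm k, Finset.sum_sub_distrib, ← Finset.smul_sum]
      congr 1
      · simp
      · rw [show (fun k => a k * v k * star (v j)) = fun k => (a k * v k) * star (v j) from rfl,
          ← Finset.sum_mul, hS, ← Quaternion.coe_mul_eq_smul, ← mul_assoc, ← Quaternion.coe_mul]
        have : 2 * t⁻¹ * (β ^ 2 - β * ‖w z‖) = 1 := by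
          rw [ht] at ht0 ⊢
          field_simp
          exact div_self (fun h => ht0 (by linear_combination 2 * h))
        rw [this]
        simp
    refine ⟨H * D, ?_, ?_, ?_, ?_⟩
    · rw [Matrix.conjTranspose_mul, hHH, ← mul_assoc, mul_assoc H D Dᴴ, hDD, mul_one, hHHmul]
    · rw [Matrix.conjTranspose_mul, hHH, ← mul_assoc, mul_assoc Dᴴ H H, hHHmul, mul_one, hDD']
    · intro j hj
      have : ∀ k, a k * (H * D) k j = (a k * H k j) * d j := by
        intro k
        rw [hD, Matrix.mul_diagonal, ← mul_assoc]
      rw [Finset.sum_congr rfl fun k _ => this k, ← Finset.sum_mul, hrow]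
      rw [hvne j hj]
      have : star (w j) = a j := by simp [hw]
      rw [this, sub_self, zero_mul]
    · have : ∀ k, a k * (H * D) k z = (a k * H k z) * d z := by
        intro k
        rw [hD, Matrix.mul_diagonal, ← mul_assoc]
      rw [Finset.sum_congr rfl fun k _ => this k, ← Finset.sum_mul, hrow, hdz, hvz, star_sub,
        StarMul.star_mul, Quaternion.star_coe]
      have haz : a z = star (w z) := by simp [hw]
      rw [← haz, sub_sub_cancel, q_mul_comm, mul_assoc, hspp, mul_one]

/-- **Zeroing the first row** (the basic right-transformation step of the
bidiagonalization, §3 of the paper): for any `r × c` quaternion matrix `A` (with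
`r, c ≥ 1`) there is a unitary quaternion matrix `G` such that the first row of `A G` is
`‖a‖ e₁ᵀ`, where `a` is the first row of `A`: all entries after the first vanish and the
leading entry is the real number `‖a‖`. -/
theorem quaternion_householder_zeros_first_row (r c : ℕ) (hr : 1 ≤ r) (hc : 1 ≤ c)
    (A : Matrix (Fin r) (Fin c) (Quaternion ℝ)) :
    ∃ G : Matrix (Fin c) (Fin c) (Quaternion ℝ),
      G * Gᴴ = 1 ∧ Gᴴ * G = 1 ∧
      (∀ j : Fin c, j ≠ ⟨0, hc⟩ → (A * G) ⟨0, hr⟩ j = 0) ∧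
      (A * G) ⟨0, hr⟩ ⟨0, hc⟩ =
        ((Real.sqrt (∑ j, ‖A ⟨0, hr⟩ j‖ ^ 2) : ℝ) : Quaternion ℝ) := by
  obtain ⟨G, h1, h2, h3, h4⟩ := key_lemma c ⟨0, hc⟩ (fun j => A ⟨0, hr⟩ j)
  refine ⟨G, h1, h2, fun j hj => ?_, ?_⟩
  · rw [Matrix.mul_apply]
    exact h3 j hj
  · rw [Matrix.mul_apply]
    exact h4

end
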